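/- Let ρ₀ ∈ (0,1), C = {p ∈ ℝ² : ρ₀ ≤ ‖p‖ ≤ 1} and C* = {p ∈ ℝ² : ρ₀ ≤ ‖p‖ < 1}, and let 0 < β < 1. Let (τ_k)_{k≥1} be positive reals with ∑_k τ_k < ∞, A ≥ 0, (f_k)_{k≥0} maps from ℝ² to ℝ³ each continuously differentiable on a neighborhood of C, and (g_k)_{k≥0} continuous fields of symmetric bilinear forms on C, satisfying properties (P1): ‖g_k(p) − (f_k*⟨,⟩)(p)‖ ≤ ‖g_{k+1}(p) − g_k(p)‖ for all p ∈ C; (P2): ‖f_k(p) − f_{k−1}(p)‖ ≤ τ_k for all p ∈ C; (P3): ‖Df_k(p) − Df_{k−1}(p)‖ ≤ τ_k + A·‖g_k(p) − (f_{k−1}*⟨,⟩)(p)‖^{1/2} for all p ∈ C; (P4): for every compact K ⊆ C*, ∑_k (sup_{p∈K} ‖g_k(p) − g_{k−1}(p)‖)^{1/2} < ∞; and suppose the f_k converge uniformly on C to a map f_∞. If in addition (i) there is k₀ such that for all k ≥ k₀, τ_k ≤ (sup_{p∈C} ‖g_k(p) − g_{k−1}(p)‖)^{1/2}, and (ii)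 ∑_k τ_k^{1−β} · (sup_{p∈C} ‖g_k(p) − g_{k−1}(p)‖)^{β/2} < ∞, then f_∞ is β-Hölder on C: there exists M ≥ 0 with ‖f_∞(p) − f_∞(q)‖ ≤ M‖p−q‖^β for all p, q ∈ C. -/

import Mathlib

open scoped RealInnerProductSpace NNReal

noncomputable section

abbrev E2 := EuclideanSpace ℝ (Fin 2)
abbrev E3 := EuclideanSpace ℝ (Fin 3)

/-- The norm `‖b‖ = sup_{v ≠ 0} |b(v,v)|/‖v‖²` of a symmetric bilinear form on `ℝ²`. -/
noncomputable def bnorm (b : E2 →ₗ[ℝ] E2 →ₗ[ℝ] ℝ) : ℝ :=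
  ⨆ v : E2, |b v v| / ‖v‖ ^ 2

/-- The pullback metric `(f*⟨,⟩)(p)` of a map `f : ℝ² → ℝ³` at the point `p`,
as a bilinear form on `ℝ²`. -/
noncomputable def pullbackForm (f : E2 → E3) (p : E2) : E2 →ₗ[ℝ] E2 →ₗ[ℝ] ℝ :=
  LinearMap.mk₂ ℝ (fun u v => ⟪fderiv ℝ f p u, fderiv ℝ f p v⟫)
    (fun u u' v => by simp [map_add, inner_add_left])
    (fun c u v => by simp [map_smul, real_inner_smul_left, Finset.mul_sum, mul_assoc])
    (fun u v v' => by simp [map_add, inner_add_right])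
    (fun c u v => by
      simp [map_smul, real_inner_smul_right, Finset.mul_sum])


noncomputable def bN (b : E2 →ₗ[ℝ] E2 →ₗ[ℝ] ℝ) : ℝ :=
  ∑ i : Fin 2, ∑ j : Fin 2, |b (EuclideanSpace.single i 1) (EuclideanSpace.single j 1)|

lemma bN_nonneg (b : E2 →ₗ[ℝ] E2 →ₗ[ℝ] ℝ) : 0 ≤ bN b := by
  apply Finset.sum_nonneg; intro i _; apply Finset.sum_nonneg; intro j _; exact abs_nonneg _

lemma coord_le_norm (v : E2) (i : Fin 2) : |v i| ≤ ‖v‖ := by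
  rw [EuclideanSpace.norm_eq, ← Real.sqrt_sq_eq_abs]
  apply Real.sqrt_le_sqrt
  have : v i ^ 2 = ‖v i‖ ^ 2 := by rw [Real.norm_eq_abs, sq_abs]
  rw [this]
  exact Finset.single_le_sum (f := fun j => ‖v j‖ ^ 2) (fun j _ => by positivity) (Finset.mem_univ i)

lemma repr_sum (v : E2) : ∑ i : Fin 2, v i • EuclideanSpace.single i (1:ℝ) = v := by
  have h := (EuclideanSpace.basisFun (Fin 2) ℝ).sum_repr v
  simpa [EuclideanSpace.basisFun_apply, EuclideanSpace.basisFun_repr] using h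

lemma abs_apply_le (b : E2 →ₗ[ℝ] E2 →ₗ[ℝ] ℝ) (v : E2) : |b v v| ≤ bN b * ‖v‖ ^ 2 := by
  have expand2 : b v v = ∑ i : Fin 2, ∑ j : Fin 2,
      v i * v j * b (EuclideanSpace.single i 1) (EuclideanSpace.single j 1) := by
    conv_lhs => rw [← repr_sum v]
    simp only [Fin.sum_univ_two, map_add, map_smul, LinearMap.add_apply, LinearMap.smul_apply,
      smul_eq_mul]
    ring
  rw [expand2, bN, Finset.sum_mul]
  refine le_trans (Finset.abs_sum_le_sum_abs _ _) (Finset.sum_le_sum fun i _ => ?_)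
  rw [Finset.sum_mul]
  refine le_trans (Finset.abs_sum_le_sum_abs _ _) (Finset.sum_le_sum fun j _ => ?_)
  rw [abs_mul, abs_mul]
  calc |v i| * |v j| * |b (EuclideanSpace.single i 1) (EuclideanSpace.single j 1)|
      ≤ ‖v‖ * ‖v‖ * |b (EuclideanSpace.single i 1) (EuclideanSpace.single j 1)| := by
        apply mul_le_mul_of_nonneg_right _ (abs_nonneg _)
        exact mul_le_mul (coord_le_norm v i) (coord_le_norm v j) (abs_nonneg _) (norm_nonneg _)
    _ = |b (EuclideanSpace.single i 1) (EuclideanSpace.single j 1)| * ‖v‖ ^ 2 := by ring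

lemma ratio_le_bN (b : E2 →ₗ[ℝ] E2 →ₗ[ℝ] ℝ) (v : E2) : |b v v| / ‖v‖ ^ 2 ≤ bN b := by
  rcases eq_or_ne v 0 with rfl | hv
  · simp [bN_nonneg b]
  · rw [div_le_iff₀ (pow_pos (norm_pos_iff.mpr hv) 2)]
    exact abs_apply_le b v

lemma bnorm_bddAbove (b : E2 →ₗ[ℝ] E2 →ₗ[ℝ] ℝ) :
    BddAbove (Set.range fun v : E2 => |b v v| / ‖v‖ ^ 2) :=
  ⟨bN b, by rintro x ⟨v, rfl⟩; exact ratio_le_bN b v⟩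

lemma ratio_le_bnorm (b : E2 →ₗ[ℝ] E2 →ₗ[ℝ] ℝ) (v : E2) : |b v v| / ‖v‖ ^ 2 ≤ bnorm b :=
  le_ciSup (bnorm_bddAbove b) v

lemma bnorm_nonneg (b : E2 →ₗ[ℝ] E2 →ₗ[ℝ] ℝ) : 0 ≤ bnorm b := by
  have := ratio_le_bnorm b 0
  simpa using this

lemma bnorm_le_bN (b : E2 →ₗ[ℝ] E2 →ₗ[ℝ] ℝ) : bnorm b ≤ bN b :=
  ciSup_le (ratio_le_bN b)

lemma bnorm_add_le (a b : E2 →ₗ[ℝ] E2 →ₗ[ℝ] ℝ) : bnorm (a + b) ≤ bnorm a + bnorm b := by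
  apply ciSup_le
  intro v
  have key : |(a + b) v v| / ‖v‖ ^ 2 ≤ |a v v| / ‖v‖ ^ 2 + |b v v| / ‖v‖ ^ 2 := by
    rw [← add_div, LinearMap.add_apply, LinearMap.add_apply]
    rcases eq_or_ne v 0 with rfl | hv
    · simp
    · exact div_le_div_of_nonneg_right (abs_add_le _ _) (pow_pos (norm_pos_iff.mpr hv) 2).le
  exact key.trans (add_le_add (ratio_le_bnorm a v) (ratio_le_bnorm b v))

lemma arith_lb (ρ₀ u r s t w : ℝ) (hρ₀ : 0 < ρ₀) (hu0 : 0 ≤ u) (hu1 : u ≤ 1)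
    (hr : ρ₀ * (1 + u ^ 2) ≤ r) (hs : 0 ≤ s) (ht : 0 ≤ t) (hst : s + t = 1)
    (hw0 : 0 ≤ w)
    (hw : w ^ 2 = s ^ 2 * r ^ 2 + 2 * (s * t * (r ^ 2 - (r * u) ^ 2 / 2)) + t ^ 2 * r ^ 2) :
    ρ₀ ≤ w := by
  have hr0 : 0 ≤ r := le_trans (by positivity) hr
  have h2 : ρ₀ ^ 2 * (1 + u ^ 2) ^ 2 ≤ r ^ 2 := by
    have := mul_self_le_mul_self (by positivity : (0:ℝ) ≤ ρ₀ * (1 + u ^ 2)) hr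
    nlinarith [this]
  have hx : (0:ℝ) ≤ u ^ 2 := sq_nonneg u
  have hx1 : u ^ 2 ≤ 1 := by nlinarith
  have h44 : u ^ 4 ≤ 1 := by nlinarith
  have h46 : u ^ 6 ≤ u ^ 2 := by nlinarith
  have h3 : (1 : ℝ) ≤ (1 + u ^ 2) ^ 2 * (1 - u ^ 2 / 4) := by nlinarith
  have h1 : s * t ≤ 1 / 4 := by nlinarith [sq_nonneg (s - t)]
  have hst' : 0 ≤ s * t := mul_nonneg hs ht
  have hq : (0:ℝ) ≤ 1 - u ^ 2 / 4 := by nlinarith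
  have hw' : w ^ 2 = r ^ 2 - s * t * (r ^ 2 * u ^ 2) := by
    have e : s ^ 2 + 2 * (s * t) + t ^ 2 = 1 := by linear_combination (s + t + 1) * hst
    linear_combination hw + r ^ 2 * e
  have h5 : s * t * (r ^ 2 * u ^ 2) ≤ 1 / 4 * (r ^ 2 * u ^ 2) :=
    mul_le_mul_of_nonneg_right h1 (by positivity)
  have h6 : (ρ₀ ^ 2 * (1 + u ^ 2) ^ 2) * (1 - u ^ 2 / 4) ≤ r ^ 2 * (1 - u ^ 2 / 4) :=
    mul_le_mul_of_nonneg_right h2 hq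
  have h7 : ρ₀ ^ 2 ≤ ρ₀ ^ 2 * ((1 + u ^ 2) ^ 2 * (1 - u ^ 2 / 4)) := by
    have := mul_le_mul_of_nonneg_left h3 (sq_nonneg ρ₀)
    simpa using this
  have hkey : ρ₀ ^ 2 ≤ w ^ 2 := by linarith [h5, h6, h7, hw']
  calc ρ₀ = Real.sqrt (ρ₀ ^ 2) := (Real.sqrt_sq hρ₀.le).symm
    _ ≤ Real.sqrt (w ^ 2) := Real.sqrt_le_sqrt hkey
    _ = w := Real.sqrt_sq hw0

set_option maxHeartbeats 1000000 in
lemma chain_lemma (ρ₀ : ℝ) (hρ₀ : 0 < ρ₀) (hρ₀1 : ρ₀ < 1) (p q : E2)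
    (hp1 : ρ₀ ≤ ‖p‖) (hp2 : ‖p‖ ≤ 1) (hq1 : ρ₀ ≤ ‖q‖) (hq2 : ‖q‖ ≤ 1)
    (hd : ‖p - q‖ ≤ ρ₀ * min 1 ((1 - ρ₀) / ρ₀) / 2) :
    ∃ a b : E2,
      (segment ℝ p a ⊆ {x : E2 | ρ₀ ≤ ‖x‖ ∧ ‖x‖ ≤ 1}) ∧
      (segment ℝ a b ⊆ {x : E2 | ρ₀ ≤ ‖x‖ ∧ ‖x‖ ≤ 1}) ∧
      (segment ℝ b q ⊆ {x : E2 | ρ₀ ≤ ‖x‖ ∧ ‖x‖ ≤ 1}) ∧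
      ‖p - a‖ + ‖a - b‖ + ‖b - q‖ ≤ (8 / ρ₀) * ‖p - q‖ := by
  set d := ‖p - q‖ with hd_def
  have hd0 : 0 ≤ d := norm_nonneg _
  have hpne : p ≠ 0 := fun h => by rw [h, norm_zero] at hp1; linarith
  have hqne : q ≠ 0 := fun h => by rw [h, norm_zero] at hq1; linarith
  have hpn : (0:ℝ) < ‖p‖ := lt_of_lt_of_le hρ₀ hp1
  have hqn : (0:ℝ) < ‖q‖ := lt_of_lt_of_le hρ₀ hq1
  set ph : E2 := ‖p‖⁻¹ • p with hph_def
  set qh : E2 := ‖q‖⁻¹ • q with hqh_def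
  have hphn : ‖ph‖ = 1 := by
    rw [hph_def, norm_smul, Real.norm_eq_abs, abs_inv, abs_of_pos hpn, inv_mul_cancel₀ hpn.ne']
  have hqhn : ‖qh‖ = 1 := by
    rw [hqh_def, norm_smul, Real.norm_eq_abs, abs_inv, abs_of_pos hqn, inv_mul_cancel₀ hqn.ne']
  set u := ‖ph - qh‖ with hu_def
  have hu0 : 0 ≤ u := norm_nonneg _
  -- u ≤ 2 d / ρ₀
  have hu : u ≤ 2 * d / ρ₀ := by
    have hsplit : ph - qh = ‖p‖⁻¹ • (p - q) + (‖p‖⁻¹ - ‖q‖⁻¹) • q := by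
      rw [hph_def, hqh_def]; module
    have h1 : ‖(‖p‖⁻¹ : ℝ) • (p - q)‖ ≤ d / ρ₀ := by
      rw [norm_smul, Real.norm_eq_abs, abs_inv, abs_of_pos hpn]
      rw [div_eq_inv_mul]
      apply mul_le_mul _ le_rfl hd0 (by positivity)
      exact inv_anti₀ hρ₀ hp1
    have h2 : ‖((‖p‖⁻¹ - ‖q‖⁻¹ : ℝ)) • q‖ ≤ d / ρ₀ := by
      rw [norm_smul, Real.norm_eq_abs]
      have heq : (‖p‖⁻¹ - ‖q‖⁻¹ : ℝ) = (‖q‖ - ‖p‖) / (‖p‖ * ‖q‖) := by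
        field_simp
      have : |(‖p‖⁻¹ - ‖q‖⁻¹ : ℝ)| = |‖q‖ - ‖p‖| / (‖p‖ * ‖q‖) := by
        rw [heq, abs_div, abs_of_pos (mul_pos hpn hqn)]
      rw [this]
      have hqp : |‖q‖ - ‖p‖| ≤ d := by
        calc |‖q‖ - ‖p‖| ≤ ‖q - p‖ := abs_norm_sub_norm_le q p
          _ = d := by rw [hd_def, norm_sub_rev]
      calc |‖q‖ - ‖p‖| / (‖p‖ * ‖q‖) * ‖q‖ = |‖q‖ - ‖p‖| / ‖p‖ := by
            field_simp
          _ ≤ d / ρ₀ := div_le_div₀ hd0 hqp hρ₀ hp1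
    calc u = ‖‖p‖⁻¹ • (p - q) + (‖p‖⁻¹ - ‖q‖⁻¹) • q‖ := by rw [hu_def, hsplit]
      _ ≤ ‖(‖p‖⁻¹ : ℝ) • (p - q)‖ + ‖((‖p‖⁻¹ - ‖q‖⁻¹ : ℝ)) • q‖ := norm_add_le _ _
      _ ≤ d / ρ₀ + d / ρ₀ := add_le_add h1 h2
      _ = 2 * d / ρ₀ := by ring
  have hu1 : u ≤ min 1 ((1 - ρ₀) / ρ₀) := by
    have : 2 * d / ρ₀ ≤ min 1 ((1 - ρ₀) / ρ₀) := by
      rw [div_le_iff₀ hρ₀]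
      calc 2 * d ≤ 2 * (ρ₀ * min 1 ((1 - ρ₀) / ρ₀) / 2) := by linarith
        _ = min 1 ((1 - ρ₀) / ρ₀) * ρ₀ := by ring
    exact hu.trans this
  have hu_le_one : u ≤ 1 := hu1.trans (min_le_left _ _)
  set r := max (max ‖p‖ ‖q‖) (ρ₀ * (1 + u ^ 2)) with hr_def
  have hr_lb : ρ₀ ≤ r := le_trans (by nlinarith) (le_max_right _ _)
  have hr_ub : r ≤ 1 := by
    apply max_le (max_le hp2 hq2)
    have : u ^ 2 ≤ (1 - ρ₀) / ρ₀ := by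
      nlinarith [hu1.trans (min_le_right 1 ((1 - ρ₀) / ρ₀))]
    calc ρ₀ * (1 + u ^ 2) ≤ ρ₀ * (1 + (1 - ρ₀) / ρ₀) := by nlinarith
      _ = 1 := by field_simp; ring
  have hrp : ‖p‖ ≤ r := le_trans (le_max_left _ _) (le_max_left _ _)
  have hrq : ‖q‖ ≤ r := le_trans (le_max_right _ _) (le_max_left _ _)
  have hr0 : 0 < r := lt_of_lt_of_le hρ₀ hr_lb
  refine ⟨r • ph, r • qh, ?_, ?_, ?_, ?_⟩
  · -- segment p (r • ph)
    rintro x ⟨s, t, hs, ht, hst, rfl⟩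
    have hxp : s • p + t • (r • ph) = (s + t * (r * ‖p‖⁻¹)) • p := by
      rw [hph_def]; module
    simp only [Set.mem_setOf_eq]
    rw [hxp, norm_smul, Real.norm_eq_abs]
    have hcoef : 0 ≤ s + t * (r * ‖p‖⁻¹) := by positivity
    rw [abs_of_nonneg hcoef]
    have hexp : (s + t * (r * ‖p‖⁻¹)) * ‖p‖ = s * ‖p‖ + t * r := by
      field_simp
    rw [hexp]
    have h1 : s * ρ₀ ≤ s * ‖p‖ := mul_le_mul_of_nonneg_left hp1 hs
    have h2 : t * ρ₀ ≤ t * r := mul_le_mul_of_nonneg_left hr_lb ht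
    have h1' : s * ‖p‖ ≤ s * 1 := mul_le_mul_of_nonneg_left hp2 hs
    have h2' : t * r ≤ t * 1 := mul_le_mul_of_nonneg_left hr_ub ht
    have h3 : s * ρ₀ + t * ρ₀ = ρ₀ := by rw [← add_mul, hst, one_mul]
    constructor
    · linarith
    · linarith
  · -- segment (r • ph) (r • qh)
    rintro x ⟨s, t, hs, ht, hst, rfl⟩
    have hna : ‖r • ph‖ = r := by
      rw [norm_smul, Real.norm_eq_abs, abs_of_pos hr0, hphn, mul_one]
    have hnb : ‖r • qh‖ = r := by
      rw [norm_smul, Real.norm_eq_abs, abs_of_pos hr0, hqhn, mul_one]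
    have hab : ‖r • ph - r • qh‖ = r * u := by
      rw [← smul_sub, norm_smul, Real.norm_eq_abs, abs_of_pos hr0, hu_def]
    simp only [Set.mem_setOf_eq]
    constructor
    · -- lower bound via inner product computation
      have hinner : ‖r • ph - r • qh‖ ^ 2 = ‖r • ph‖ ^ 2 - 2 * ⟪r • ph, r • qh⟫ + ‖r • qh‖ ^ 2 :=
        norm_sub_sq_real _ _
      have hip : ⟪r • ph, r • qh⟫ = r ^ 2 - (r * u) ^ 2 / 2 := by
        rw [hab, hna, hnb] at hinner; linarith
      have hxa : ‖s • (r • ph)‖ = s * r := by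
        rw [norm_smul, Real.norm_eq_abs, abs_of_nonneg hs, hna]
      have hxb : ‖t • (r • qh)‖ = t * r := by
        rw [norm_smul, Real.norm_eq_abs, abs_of_nonneg ht, hnb]
      have hxi : ⟪s • (r • ph), t • (r • qh)⟫ = s * (t * ⟪r • ph, r • qh⟫) := by
        rw [real_inner_smul_left, real_inner_smul_right]
      have hx2 : ‖s • (r • ph) + t • (r • qh)‖ ^ 2
          = s ^ 2 * r ^ 2 + 2 * (s * t * (r ^ 2 - (r * u) ^ 2 / 2)) + t ^ 2 * r ^ 2 := by
        rw [norm_add_sq_real, hxa, hxb, hxi, hip]; ring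
      exact arith_lb ρ₀ u r s t _ hρ₀ hu0 hu_le_one (le_max_right _ _) hs ht hst
        (norm_nonneg _) hx2
    · have hxa : ‖s • (r • ph)‖ = s * r := by
        rw [norm_smul, Real.norm_eq_abs, abs_of_nonneg hs, hna]
      have hxb : ‖t • (r • qh)‖ = t * r := by
        rw [norm_smul, Real.norm_eq_abs, abs_of_nonneg ht, hnb]
      have hsum : s * r + t * r = r := by rw [← add_mul, hst, one_mul]
      calc ‖s • (r • ph) + t • (r • qh)‖ ≤ ‖s • (r • ph)‖ + ‖t • (r • qh)‖ := norm_add_le _ _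
        _ = r := by rw [hxa, hxb, hsum]
        _ ≤ 1 := hr_ub
  · -- segment (r • qh) q
    rintro x ⟨s, t, hs, ht, hst, rfl⟩
    have hxp : s • (r • qh) + t • q = (s * (r * ‖q‖⁻¹) + t) • q := by
      rw [hqh_def]; module
    simp only [Set.mem_setOf_eq]
    rw [hxp, norm_smul, Real.norm_eq_abs]
    have hcoef : 0 ≤ s * (r * ‖q‖⁻¹) + t := by positivity
    rw [abs_of_nonneg hcoef]
    have hexp : (s * (r * ‖q‖⁻¹) + t) * ‖q‖ = s * r + t * ‖q‖ := by field_simp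
    rw [hexp]
    have h1 : s * ρ₀ ≤ s * r := mul_le_mul_of_nonneg_left hr_lb hs
    have h2 : t * ρ₀ ≤ t * ‖q‖ := mul_le_mul_of_nonneg_left hq1 ht
    have h1' : s * r ≤ s * 1 := mul_le_mul_of_nonneg_left hr_ub hs
    have h2' : t * ‖q‖ ≤ t * 1 := mul_le_mul_of_nonneg_left hq2 ht
    have h3 : s * ρ₀ + t * ρ₀ = ρ₀ := by rw [← add_mul, hst, one_mul]
    exact ⟨by linarith, by linarith⟩
  · -- length bound
    have hqp_d : |‖q‖ - ‖p‖| ≤ d := by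
      calc |‖q‖ - ‖p‖| ≤ ‖q - p‖ := abs_norm_sub_norm_le q p
        _ = d := by rw [hd_def, norm_sub_rev]
    have hu2d : u ^ 2 ≤ 2 * d / ρ₀ := by
      have h := mul_le_mul_of_nonneg_left hu_le_one hu0
      rw [mul_one] at h
      calc u ^ 2 = u * u := sq u
        _ ≤ u := h
        _ ≤ 2 * d / ρ₀ := hu
    have hρu : ρ₀ * u ^ 2 ≤ 2 * d := by
      have := mul_le_mul_of_nonneg_left hu2d hρ₀.le
      calc ρ₀ * u ^ 2 ≤ ρ₀ * (2 * d / ρ₀) := this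
        _ = 2 * d := by field_simp
    have hrub : r ≤ ‖p‖ + (d + ρ₀ * u ^ 2) := by
      apply max_le (max_le (by linarith [hd0, mul_nonneg hρ₀.le (sq_nonneg u)]) ?_) ?_
      · linarith [(abs_le.mp hqp_d).2, mul_nonneg hρ₀.le (sq_nonneg u)]
      · nlinarith [hp1, hd0]
    have hrub' : r ≤ ‖q‖ + (d + ρ₀ * u ^ 2) := by
      apply max_le (max_le ?_ (by linarith [hd0, mul_nonneg hρ₀.le (sq_nonneg u)])) ?_
      · linarith [(abs_le.mp hqp_d).1, mul_nonneg hρ₀.le (sq_nonneg u)]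
      · nlinarith [hq1, hd0]
    have hpa : ‖p - r • ph‖ = r - ‖p‖ := by
      have hc : ((‖p‖ - r) * ‖p‖⁻¹ : ℝ) = 1 - r * ‖p‖⁻¹ := by field_simp
      have he : p - r • ph = ((‖p‖ - r) * ‖p‖⁻¹) • p := by
        rw [hph_def, smul_smul, hc, sub_smul, one_smul]
      rw [he, norm_smul, Real.norm_eq_abs, abs_mul, abs_inv, abs_of_pos hpn,
        abs_sub_comm, abs_of_nonneg (sub_nonneg.mpr hrp), mul_assoc,
        inv_mul_cancel₀ hpn.ne', mul_one]
    have hbq : ‖r • qh - q‖ = r - ‖q‖ := by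
      have hc : ((r - ‖q‖) * ‖q‖⁻¹ : ℝ) = r * ‖q‖⁻¹ - 1 := by field_simp
      have he : r • qh - q = ((r - ‖q‖) * ‖q‖⁻¹) • q := by
        rw [hqh_def, smul_smul, hc, sub_smul, one_smul]
      rw [he, norm_smul, Real.norm_eq_abs, abs_mul, abs_inv, abs_of_pos hqn,
        abs_of_nonneg (sub_nonneg.mpr hrq), mul_assoc, inv_mul_cancel₀ hqn.ne', mul_one]
    have hab : ‖r • ph - r • qh‖ = r * u := by
      rw [← smul_sub, norm_smul, Real.norm_eq_abs, abs_of_pos hr0, hu_def]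
    rw [hpa, hab, hbq]
    have hru : r * u ≤ u := by nlinarith
    have hfin : 6 * d + 2 * d / ρ₀ ≤ 8 / ρ₀ * d := by
      have e1 : 6 * d + 2 * d / ρ₀ = (6 * d * ρ₀ + 2 * d) / ρ₀ := by
        field_simp
      have e2 : 8 / ρ₀ * d = 8 * d / ρ₀ := by ring
      rw [e1, e2]
      apply div_le_div_of_nonneg_right ?_ hρ₀.le
      nlinarith [hd0, hρ₀1]
    calc (r - ‖p‖) + r * u + (r - ‖q‖)
        ≤ (d + ρ₀ * u ^ 2) + u + (d + ρ₀ * u ^ 2) := by linarith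
      _ ≤ (d + 2 * d) + 2 * d / ρ₀ + (d + 2 * d) := by linarith
      _ = 6 * d + 2 * d / ρ₀ := by ring
      _ ≤ 8 / ρ₀ * d := hfin

lemma rpow_add_le_add_rpow_real (a b p : ℝ) (ha : 0 ≤ a) (hb : 0 ≤ b)
    (hp : 0 ≤ p) (hp1 : p ≤ 1) : (a + b) ^ p ≤ a ^ p + b ^ p := by
  have h := NNReal.rpow_add_le_add_rpow a.toNNReal b.toNNReal hp hp1
  have h2 : (((a.toNNReal + b.toNNReal) ^ p : ℝ≥0) : ℝ) ≤ ((a.toNNReal ^ p + b.toNNReal ^ p : ℝ≥0) : ℝ) := by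
    exact_mod_cast h
  have e1 : (((a.toNNReal + b.toNNReal) ^ p : ℝ≥0) : ℝ) = (a + b) ^ p := by
    rw [NNReal.coe_rpow, NNReal.coe_add, Real.coe_toNNReal a ha, Real.coe_toNNReal b hb]
  have e2 : ((a.toNNReal ^ p + b.toNNReal ^ p : ℝ≥0) : ℝ) = a ^ p + b ^ p := by
    rw [NNReal.coe_add, NNReal.coe_rpow, NNReal.coe_rpow, Real.coe_toNNReal a ha,
      Real.coe_toNNReal b hb]
  rw [e1, e2] at h2
  exact h2

lemma interp_min (x a y β : ℝ) (hx0 : 0 ≤ x) (hxa : x ≤ a) (hxy : x ≤ y)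
    (ha : 0 ≤ a) (hy : 0 ≤ y) (hβ0 : 0 < β) (hβ1 : β < 1) :
    x ≤ a ^ (1 - β) * y ^ β := by
  rcases eq_or_lt_of_le hx0 with hx | hx
  · rw [← hx]; positivity
  · have e : x = x ^ (1 - β) * x ^ β := by
      rw [← Real.rpow_add hx, sub_add_cancel, Real.rpow_one]
    rw [e]
    apply mul_le_mul (Real.rpow_le_rpow hx0 hxa (by linarith))
      (Real.rpow_le_rpow hx0 hxy hβ0.le) (by positivity) (by positivity)

lemma lip_of_chain (ρ₀ : ℝ) (hρ₀ : 0 < ρ₀) (hρ₀1 : ρ₀ < 1)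
    (h : E2 → E3) (U : Set E2) (hU : IsOpen U)
    (hCU : {x : E2 | ρ₀ ≤ ‖x‖ ∧ ‖x‖ ≤ 1} ⊆ U) (hcd : ContDiffOn ℝ 1 h U)
    (L : ℝ) (hL0 : 0 ≤ L) (hL : ∀ x ∈ {x : E2 | ρ₀ ≤ ‖x‖ ∧ ‖x‖ ≤ 1}, ‖fderiv ℝ h x‖ ≤ L)
    (p q : E2) (hp : p ∈ {x : E2 | ρ₀ ≤ ‖x‖ ∧ ‖x‖ ≤ 1}) (hq : q ∈ {x : E2 | ρ₀ ≤ ‖x‖ ∧ ‖x‖ ≤ 1})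
    (hd : ‖p - q‖ ≤ ρ₀ * min 1 ((1 - ρ₀) / ρ₀) / 2) :
    ‖h p - h q‖ ≤ 8 / ρ₀ * L * ‖p - q‖ := by
  obtain ⟨a, b, hs1, hs2, hs3, hlen⟩ :=
    chain_lemma ρ₀ hρ₀ hρ₀1 p q hp.1 hp.2 hq.1 hq.2 hd
  have hdiff : ∀ x ∈ {x : E2 | ρ₀ ≤ ‖x‖ ∧ ‖x‖ ≤ 1}, DifferentiableAt ℝ h x := fun x hx =>
    (hcd.contDiffAt (hU.mem_nhds (hCU hx))).differentiableAt one_ne_zero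
  have seg_bound : ∀ x y : E2, segment ℝ x y ⊆ {x : E2 | ρ₀ ≤ ‖x‖ ∧ ‖x‖ ≤ 1} →
      ‖h y - h x‖ ≤ L * ‖y - x‖ := by
    intro x y hsub
    exact (convex_segment x y).norm_image_sub_le_of_norm_fderiv_le
      (fun z hz => hdiff z (hsub hz)) (fun z hz => hL z (hsub hz))
      (left_mem_segment ℝ x y) (right_mem_segment ℝ x y)
  have h1 := seg_bound p a hs1
  have h2 := seg_bound a b hs2
  have h3 := seg_bound b q hs3
  rw [norm_sub_rev (h a) (h p), norm_sub_rev a p] at h1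
  rw [norm_sub_rev (h b) (h a), norm_sub_rev b a] at h2
  rw [norm_sub_rev (h q) (h b), norm_sub_rev q b] at h3
  calc ‖h p - h q‖ = ‖(h p - h a) + (h a - h b) + (h b - h q)‖ := by abel_nf
    _ ≤ ‖h p - h a‖ + ‖h a - h b‖ + ‖h b - h q‖ :=
        le_trans (norm_add_le _ _) (by linarith [norm_add_le (h p - h a) (h a - h b)])
    _ ≤ L * ‖p - a‖ + L * ‖a - b‖ + L * ‖b - q‖ := by linarith
    _ = L * (‖p - a‖ + ‖a - b‖ + ‖b - q‖) := by ring
    _ ≤ L * (8 / ρ₀ * ‖p - q‖) := mul_le_mul_of_nonneg_left hlen hL0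
    _ = 8 / ρ₀ * L * ‖p - q‖ := by ring


set_option maxHeartbeats 1000000 in
/-- Hölder regularity of the limit map (Proposition 2.2): under (P1)–(P4) and the two
additional conditions (i) and (ii), the uniform limit `f∞` of the sequence `(f_k)` is
`β`-Hölder on the closed annulus `C`. -/
theorem stmt2 (ρ₀ : ℝ) (hρ₀ : 0 < ρ₀) (hρ₀1 : ρ₀ < 1)
    (β : ℝ) (hβ0 : 0 < β) (hβ1 : β < 1)
    (C Cstar : Set E2)
    (hC : C = {p : E2 | ρ₀ ≤ ‖p‖ ∧ ‖p‖ ≤ 1})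
    (hCstar : Cstar = {p : E2 | ρ₀ ≤ ‖p‖ ∧ ‖p‖ < 1})
    (τ : ℕ → ℝ) (hτpos : ∀ k, 0 < τ k) (hτsum : Summable τ)
    (A : ℝ) (hA : 0 ≤ A)
    (f : ℕ → E2 → E3)
    (hfC1 : ∀ k, ∃ U : Set E2, IsOpen U ∧ C ⊆ U ∧ ContDiffOn ℝ 1 (f k) U)
    (g : ℕ → E2 → (E2 →ₗ[ℝ] E2 →ₗ[ℝ] ℝ))
    (hgsymm : ∀ k, ∀ p ∈ C, ∀ u v : E2, g k p u v = g k p v u)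
    (hgcont : ∀ k, ∀ u v : E2, ContinuousOn (fun p => g k p u v) C)
    -- (P1)
    (hP1 : ∀ k : ℕ, ∀ p ∈ C,
      bnorm (g (k + 1) p - pullbackForm (f (k + 1)) p) ≤ bnorm (g (k + 2) p - g (k + 1) p))
    -- (P2)
    (hP2 : ∀ k : ℕ, ∀ p ∈ C, ‖f (k + 1) p - f k p‖ ≤ τ (k + 1))
    -- (P3)
    (hP3 : ∀ k : ℕ, ∀ p ∈ C,
      ‖fderiv ℝ (f (k + 1)) p - fderiv ℝ (f k) p‖
        ≤ τ (k + 1) + A * Real.sqrt (bnorm (g (k + 1) p - pullbackForm (f k) p)))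
    -- (P4)
    (hP4 : ∀ K : Set E2, K ⊆ Cstar → IsCompact K →
      Summable (fun k : ℕ => Real.sqrt (⨆ p : K, bnorm (g (k + 1) (p : E2) - g k (p : E2)))))
    -- the uniform limit on C
    (finf : E2 → E3)
    (hconv : TendstoUniformlyOn f finf Filter.atTop C)
    -- condition (i)
    (hi : ∃ k₀ : ℕ, ∀ k : ℕ, k₀ ≤ k →
      τ (k + 1) ≤ Real.sqrt (⨆ p : C, bnorm (g (k + 1) (p : E2) - g k (p : E2))))
    -- condition (ii)
    (hii : Summable (fun k : ℕ =>
      τ (k + 1) ^ (1 - β) * (⨆ p : C, bnorm (g (k + 1) (p : E2) - g k (p : E2))) ^ (β / 2))) :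
    ∃ M : ℝ, 0 ≤ M ∧ ∀ p ∈ C, ∀ q ∈ C, ‖finf p - finf q‖ ≤ M * ‖p - q‖ ^ β := by
  subst hC
  have hmin : 0 < min 1 ((1 - ρ₀) / ρ₀) := lt_min one_pos (div_pos (by linarith) hρ₀)
  set d₀ := ρ₀ * min 1 ((1 - ρ₀) / ρ₀) / 2 with hd₀def
  have hd₀ : 0 < d₀ := div_pos (mul_pos hρ₀ hmin) two_pos
  set κ := 8 / ρ₀ with hκdef
  have hκ0 : 0 < κ := by positivity
  -- compactness of C
  have hCcl : IsClosed {p : E2 | ρ₀ ≤ ‖p‖ ∧ ‖p‖ ≤ 1} := by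
    have : {p : E2 | ρ₀ ≤ ‖p‖ ∧ ‖p‖ ≤ 1}
        = {p : E2 | ρ₀ ≤ ‖p‖} ∩ {p : E2 | ‖p‖ ≤ 1} := rfl
    rw [this]
    exact (isClosed_le continuous_const continuous_norm).inter
      (isClosed_le continuous_norm continuous_const)
  have hCbd : Bornology.IsBounded {p : E2 | ρ₀ ≤ ‖p‖ ∧ ‖p‖ ≤ 1} := by
    apply (Metric.isBounded_closedBall (x := (0:E2)) (r := 1)).subset
    intro x hx
    rw [Metric.mem_closedBall, dist_zero_right]
    exact hx.2
  have hCcpt : IsCompact {p : E2 | ρ₀ ≤ ‖p‖ ∧ ‖p‖ ≤ 1} :=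
    Metric.isCompact_of_isClosed_isBounded hCcl hCbd
  set pC : E2 := EuclideanSpace.single 0 (1:ℝ) with hpCdef
  have hpC : pC ∈ {p : E2 | ρ₀ ≤ ‖p‖ ∧ ‖p‖ ≤ 1} := by
    have : ‖pC‖ = 1 := by
      rw [hpCdef, EuclideanSpace.norm_single, norm_one]
    exact ⟨by rw [this]; linarith, by rw [this]⟩
  -- the sequence S
  set S : ℕ → ℝ := fun k =>
    ⨆ p : {p : E2 | ρ₀ ≤ ‖p‖ ∧ ‖p‖ ≤ 1}, bnorm (g (k + 1) (p : E2) - g k (p : E2)) with hSdef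
  have hSbdd : ∀ k : ℕ, BddAbove (Set.range fun p : {p : E2 | ρ₀ ≤ ‖p‖ ∧ ‖p‖ ≤ 1} =>
      bnorm (g (k + 1) (p : E2) - g k (p : E2))) := by
    intro k
    have hcont : ContinuousOn (fun x : E2 => bN (g (k + 1) x - g k x))
        {p : E2 | ρ₀ ≤ ‖p‖ ∧ ‖p‖ ≤ 1} := by
      have hc2 : ContinuousOn (fun x : E2 => ∑ i : Fin 2, ∑ j : Fin 2,
          |g (k + 1) x (EuclideanSpace.single i 1) (EuclideanSpace.single j 1)
            - g k x (EuclideanSpace.single i 1) (EuclideanSpace.single j 1)|)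
          {p : E2 | ρ₀ ≤ ‖p‖ ∧ ‖p‖ ≤ 1} := by
        apply continuousOn_finset_sum
        intro i _
        apply continuousOn_finset_sum
        intro j _
        exact ((hgcont (k + 1) _ _).sub (hgcont k _ _)).abs
      exact hc2.congr fun x hx => by simp [bN, LinearMap.sub_apply]
    obtain ⟨Mk, hMk⟩ := hCcpt.exists_bound_of_continuousOn hcont
    refine ⟨Mk, ?_⟩
    rintro y ⟨⟨x, hx⟩, rfl⟩
    calc bnorm (g (k + 1) x - g k x) ≤ bN (g (k + 1) x - g k x) := bnorm_le_bN _
      _ ≤ ‖bN (g (k + 1) x - g k x)‖ := (le_abs_self _).trans_eq (Real.norm_eq_abs _).symm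
      _ ≤ Mk := hMk x hx
  have hS_le : ∀ k, ∀ x ∈ {p : E2 | ρ₀ ≤ ‖p‖ ∧ ‖p‖ ≤ 1},
      bnorm (g (k + 1) x - g k x) ≤ S k := fun k x hx => le_ciSup (hSbdd k) ⟨x, hx⟩
  have hS0 : ∀ k, 0 ≤ S k := fun k => le_trans (bnorm_nonneg _) (hS_le k pC hpC)
  -- differentiability
  have hdiffat : ∀ k, ∀ x ∈ {p : E2 | ρ₀ ≤ ‖p‖ ∧ ‖p‖ ≤ 1}, DifferentiableAt ℝ (f k) x := by
    intro k x hx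
    obtain ⟨U, hUopen, hCU, hcd⟩ := hfC1 k
    exact (hcd.contDiffAt (hUopen.mem_nhds (hCU hx))).differentiableAt one_ne_zero
  -- Lipschitz constants for the increments
  set Lb : ℕ → ℝ := fun j => τ (j + 2) + A * (Real.sqrt 2 * Real.sqrt (S (j + 1))) with hLbdef
  have hLb0 : ∀ j, 0 ≤ Lb j := by
    intro j
    have h1 := (hτpos (j + 2)).le
    have h2 : 0 ≤ A * (Real.sqrt 2 * Real.sqrt (S (j + 1))) := by positivity
    show (0:ℝ) ≤ τ (j + 2) + A * (Real.sqrt 2 * Real.sqrt (S (j + 1)))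
    linarith
  have hinc_lip : ∀ j, ∀ p ∈ {p : E2 | ρ₀ ≤ ‖p‖ ∧ ‖p‖ ≤ 1},
      ∀ q ∈ {p : E2 | ρ₀ ≤ ‖p‖ ∧ ‖p‖ ≤ 1}, ‖p - q‖ ≤ d₀ →
      ‖(f (j + 2) p - f (j + 1) p) - (f (j + 2) q - f (j + 1) q)‖ ≤ κ * Lb j * ‖p - q‖ := by
    intro j p hp q hq hpq
    obtain ⟨U2, hU2o, hCU2, hcd2⟩ := hfC1 (j + 2)
    obtain ⟨U1, hU1o, hCU1, hcd1⟩ := hfC1 (j + 1)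
    have hfd : ∀ x ∈ {p : E2 | ρ₀ ≤ ‖p‖ ∧ ‖p‖ ≤ 1},
        ‖fderiv ℝ (fun y => f (j + 2) y - f (j + 1) y) x‖ ≤ Lb j := by
      intro x hx
      have hde : fderiv ℝ (fun y => f (j + 2) y - f (j + 1) y) x
          = fderiv ℝ (f (j + 2)) x - fderiv ℝ (f (j + 1)) x :=
        fderiv_sub (hdiffat (j + 2) x hx) (hdiffat (j + 1) x hx)
      rw [hde]
      have hb1 : bnorm (g (j + 2) x - pullbackForm (f (j + 1)) x) ≤ 2 * S (j + 1) := by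
        have hsplit : g (j + 2) x - pullbackForm (f (j + 1)) x
            = (g (j + 2) x - g (j + 1) x) + (g (j + 1) x - pullbackForm (f (j + 1)) x) := by
          abel
        calc bnorm (g (j + 2) x - pullbackForm (f (j + 1)) x)
            ≤ bnorm (g (j + 2) x - g (j + 1) x)
              + bnorm (g (j + 1) x - pullbackForm (f (j + 1)) x) := by
              rw [hsplit]; exact bnorm_add_le _ _
          _ ≤ bnorm (g (j + 2) x - g (j + 1) x) + bnorm (g (j + 2) x - g (j + 1) x) := by
              linarith [hP1 j x hx]
          _ ≤ 2 * S (j + 1) := by linarith [hS_le (j + 1) x hx]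
      calc ‖fderiv ℝ (f (j + 2)) x - fderiv ℝ (f (j + 1)) x‖
          ≤ τ (j + 2) + A * Real.sqrt (bnorm (g (j + 2) x - pullbackForm (f (j + 1)) x)) :=
            hP3 (j + 1) x hx
        _ ≤ Lb j := by
            have hsq : Real.sqrt (bnorm (g (j + 2) x - pullbackForm (f (j + 1)) x))
                ≤ Real.sqrt 2 * Real.sqrt (S (j + 1)) := by
              rw [← Real.sqrt_mul (by norm_num : (0:ℝ) ≤ 2)]
              exact Real.sqrt_le_sqrt hb1
            have := mul_le_mul_of_nonneg_left hsq hA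
            show τ (j + 2) + A * Real.sqrt (bnorm (g (j + 2) x - pullbackForm (f (j + 1)) x))
              ≤ τ (j + 2) + A * (Real.sqrt 2 * Real.sqrt (S (j + 1)))
            linarith
    have hres := lip_of_chain ρ₀ hρ₀ hρ₀1 (fun y => f (j + 2) y - f (j + 1) y) (U2 ∩ U1)
      (hU2o.inter hU1o) (Set.subset_inter hCU2 hCU1)
      ((hcd2.mono Set.inter_subset_left).sub (hcd1.mono Set.inter_subset_right))
      (Lb j) (hLb0 j) hfd p q hp hq hpq
    rw [hκdef]
    exact hres
  have hinc_sup : ∀ j, ∀ p ∈ {p : E2 | ρ₀ ≤ ‖p‖ ∧ ‖p‖ ≤ 1},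
      ∀ q ∈ {p : E2 | ρ₀ ≤ ‖p‖ ∧ ‖p‖ ≤ 1},
      ‖(f (j + 2) p - f (j + 1) p) - (f (j + 2) q - f (j + 1) q)‖ ≤ 2 * τ (j + 2) := by
    intro j p hp q hq
    calc ‖(f (j + 2) p - f (j + 1) p) - (f (j + 2) q - f (j + 1) q)‖
        ≤ ‖f (j + 2) p - f (j + 1) p‖ + ‖f (j + 2) q - f (j + 1) q‖ := norm_sub_le _ _
      _ ≤ τ (j + 2) + τ (j + 2) := add_le_add (hP2 (j + 1) p hp) (hP2 (j + 1) q hq)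
      _ = 2 * τ (j + 2) := by ring
  -- Lipschitz bound for f 1
  obtain ⟨U1, hU1o, hCU1, hcd1⟩ := hfC1 1
  obtain ⟨L₁', hL₁'⟩ := hCcpt.exists_bound_of_continuousOn
    ((hcd1.continuousOn_fderiv_of_isOpen hU1o le_rfl).mono hCU1)
  set L₁ := max L₁' 0 with hL₁def
  have hL₁0 : 0 ≤ L₁ := le_max_right _ _
  have hf1_lip : ∀ p ∈ {p : E2 | ρ₀ ≤ ‖p‖ ∧ ‖p‖ ≤ 1},
      ∀ q ∈ {p : E2 | ρ₀ ≤ ‖p‖ ∧ ‖p‖ ≤ 1}, ‖p - q‖ ≤ d₀ →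
      ‖f 1 p - f 1 q‖ ≤ κ * L₁ * ‖p - q‖ := by
    intro p hp q hq hpq
    have hres := lip_of_chain ρ₀ hρ₀ hρ₀1 (f 1) U1 hU1o hCU1 hcd1 L₁ hL₁0
      (fun x hx => le_trans (hL₁' x hx) (le_max_left _ _)) p q hp hq hpq
    rw [hκdef]
    exact hres
  -- the summable series c
  set c : ℕ → ℝ := fun j => (2 * τ (j + 2)) ^ (1 - β) * (κ * Lb j) ^ β with hcdef
  have hc0 : ∀ j, 0 ≤ c j := by
    intro j
    have h1 : (0:ℝ) ≤ 2 * τ (j + 2) := by linarith [(hτpos (j + 2)).le]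
    have h2 : (0:ℝ) ≤ κ * Lb j := mul_nonneg hκ0.le (hLb0 j)
    exact mul_nonneg (Real.rpow_nonneg h1 _) (Real.rpow_nonneg h2 _)
  have hcsum : Summable c := by
    have hbound : ∀ j, c j ≤ 2 ^ (1 - β) * κ ^ β
        * (τ (j + 2) + (A * Real.sqrt 2) ^ β * (τ (j + 2) ^ (1 - β) * S (j + 1) ^ (β / 2))) := by
      intro j
      have e1 : c j = 2 ^ (1 - β) * κ ^ β * (τ (j + 2) ^ (1 - β) * Lb j ^ β) := by
        show (2 * τ (j + 2)) ^ (1 - β) * (κ * Lb j) ^ β = _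
        rw [Real.mul_rpow (by norm_num) (hτpos (j + 2)).le,
          Real.mul_rpow hκ0.le (hLb0 j)]
        ring
      have e3 : (A * (Real.sqrt 2 * Real.sqrt (S (j + 1)))) ^ β
          = (A * Real.sqrt 2) ^ β * S (j + 1) ^ (β / 2) := by
        rw [← mul_assoc, Real.mul_rpow (by positivity) (Real.sqrt_nonneg _),
          Real.sqrt_eq_rpow (S (j + 1)), ← Real.rpow_mul (hS0 (j + 1)), one_div,
          inv_mul_eq_div]
      have e2 : Lb j ^ β ≤ τ (j + 2) ^ β + (A * Real.sqrt 2) ^ β * S (j + 1) ^ (β / 2) := by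
        have h := rpow_add_le_add_rpow_real (τ (j + 2))
          (A * (Real.sqrt 2 * Real.sqrt (S (j + 1)))) β (hτpos _).le (by positivity)
          hβ0.le hβ1.le
        rw [e3] at h
        exact h
      have e4 : τ (j + 2) ^ (1 - β) * τ (j + 2) ^ β = τ (j + 2) := by
        rw [← Real.rpow_add (hτpos (j + 2)), sub_add_cancel, Real.rpow_one]
      calc c j = 2 ^ (1 - β) * κ ^ β * (τ (j + 2) ^ (1 - β) * Lb j ^ β) := e1
        _ ≤ 2 ^ (1 - β) * κ ^ β * (τ (j + 2) ^ (1 - β)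
            * (τ (j + 2) ^ β + (A * Real.sqrt 2) ^ β * S (j + 1) ^ (β / 2))) := by
            apply mul_le_mul_of_nonneg_left _ (by positivity)
            exact mul_le_mul_of_nonneg_left e2 (Real.rpow_nonneg (hτpos _).le _)
        _ = 2 ^ (1 - β) * κ ^ β
            * (τ (j + 2) + (A * Real.sqrt 2) ^ β * (τ (j + 2) ^ (1 - β) * S (j + 1) ^ (β / 2))) := by
            rw [mul_add, e4]
            ring
    have hsum2 : Summable (fun j => 2 ^ (1 - β) * κ ^ β
        * (τ (j + 2) + (A * Real.sqrt 2) ^ β * (τ (j + 2) ^ (1 - β) * S (j + 1) ^ (β / 2)))) := by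
      apply Summable.mul_left
      apply Summable.add
      · exact (summable_nat_add_iff 2).mpr hτsum
      · apply Summable.mul_left
        exact (summable_nat_add_iff 1).mpr hii
    exact Summable.of_nonneg_of_le hc0 hbound hsum2
  set F := ∑' j, c j with hFdef
  have hF0 : 0 ≤ F := tsum_nonneg hc0
  have hpartial : ∀ n, ∑ j ∈ Finset.range n, c j ≤ F := fun n =>
    Summable.sum_le_tsum _ (fun i _ => hc0 i) hcsum
  -- bound on finf
  have hfinf_cont : ContinuousOn finf {p : E2 | ρ₀ ≤ ‖p‖ ∧ ‖p‖ ≤ 1} := by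
    apply hconv.continuousOn
    apply Filter.Frequently.of_forall
    intro n
    obtain ⟨U, hUo, hCU, hcd⟩ := hfC1 n
    exact hcd.continuousOn.mono hCU
  obtain ⟨B', hB'⟩ := hCcpt.exists_bound_of_continuousOn hfinf_cont
  have hB'0 : 0 ≤ B' := le_trans (norm_nonneg _) (hB' pC hpC)
  -- close pairs estimate
  have hclose : ∀ p ∈ {p : E2 | ρ₀ ≤ ‖p‖ ∧ ‖p‖ ≤ 1}, ∀ q ∈ {p : E2 | ρ₀ ≤ ‖p‖ ∧ ‖p‖ ≤ 1},
      ‖p - q‖ ≤ d₀ →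
      ‖finf p - finf q‖ ≤ κ * L₁ * ‖p - q‖ + F * ‖p - q‖ ^ β := by
    intro p hp q hq hpq
    have hstep : ∀ n : ℕ, ‖f (n + 1) p - f (n + 1) q‖
        ≤ κ * L₁ * ‖p - q‖ + F * ‖p - q‖ ^ β := by
      intro n
      have tele : ∀ x : E2, f (n + 1) x - f 1 x
          = ∑ j ∈ Finset.range n, (f (j + 2) x - f (j + 1) x) :=
        fun x => (Finset.sum_range_sub (fun i => f (i + 1) x) n).symm
      have e : f (n + 1) p - f (n + 1) q
          = (f 1 p - f 1 q) + ∑ j ∈ Finset.range n,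
            ((f (j + 2) p - f (j + 1) p) - (f (j + 2) q - f (j + 1) q)) := by
        rw [Finset.sum_sub_distrib, ← tele p, ← tele q]
        abel
      rw [e]
      have hterm : ∀ j, ‖(f (j + 2) p - f (j + 1) p) - (f (j + 2) q - f (j + 1) q)‖
          ≤ c j * ‖p - q‖ ^ β := by
        intro j
        have h1 := hinc_sup j p hp q hq
        have h2 := hinc_lip j p hp q hq hpq
        have hmin := interp_min
          (‖(f (j + 2) p - f (j + 1) p) - (f (j + 2) q - f (j + 1) q)‖)
          (2 * τ (j + 2)) (κ * Lb j * ‖p - q‖) β (norm_nonneg _) h1 h2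
          (by linarith [(hτpos (j + 2)).le])
          (mul_nonneg (mul_nonneg hκ0.le (hLb0 j)) (norm_nonneg _)) hβ0 hβ1
        have e2 : (κ * Lb j * ‖p - q‖) ^ β = (κ * Lb j) ^ β * ‖p - q‖ ^ β :=
          Real.mul_rpow (mul_nonneg hκ0.le (hLb0 j)) (norm_nonneg _)
        rw [e2] at hmin
        have e3 : c j * ‖p - q‖ ^ β
            = (2 * τ (j + 2)) ^ (1 - β) * ((κ * Lb j) ^ β * ‖p - q‖ ^ β) := by
          show (2 * τ (j + 2)) ^ (1 - β) * (κ * Lb j) ^ β * ‖p - q‖ ^ β = _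
          ring
        rw [e3]
        linarith [hmin, mul_le_mul_of_nonneg_left hmin
          (Real.rpow_nonneg (by linarith [(hτpos (j + 2)).le] : (0:ℝ) ≤ 2 * τ (j + 2)) (1 - β))]
      calc ‖(f 1 p - f 1 q) + ∑ j ∈ Finset.range n,
              ((f (j + 2) p - f (j + 1) p) - (f (j + 2) q - f (j + 1) q))‖
          ≤ ‖f 1 p - f 1 q‖ + ‖∑ j ∈ Finset.range n,
              ((f (j + 2) p - f (j + 1) p) - (f (j + 2) q - f (j + 1) q))‖ := norm_add_le _ _
        _ ≤ κ * L₁ * ‖p - q‖ + ∑ j ∈ Finset.range n, c j * ‖p - q‖ ^ β := by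
            apply add_le_add (hf1_lip p hp q hq hpq)
            exact le_trans (norm_sum_le _ _) (Finset.sum_le_sum fun j _ => hterm j)
        _ ≤ κ * L₁ * ‖p - q‖ + F * ‖p - q‖ ^ β := by
            apply add_le_add_right
            rw [← Finset.sum_mul]
            exact mul_le_mul_of_nonneg_right (hpartial n) (Real.rpow_nonneg (norm_nonneg _) _)
    have hlim : Filter.Tendsto (fun n => ‖f (n + 1) p - f (n + 1) q‖)
        Filter.atTop (nhds ‖finf p - finf q‖) := by
      have hp' := (hconv.tendsto_at hp).comp (Filter.tendsto_add_atTop_nat 1)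
      have hq' := (hconv.tendsto_at hq).comp (Filter.tendsto_add_atTop_nat 1)
      exact (hp'.sub hq').norm
    exact le_of_tendsto hlim (Filter.Eventually.of_forall hstep)
  -- conclusion
  have hM0 : 0 ≤ 2 * B' / d₀ ^ β + κ * L₁ * d₀ ^ (1 - β) + F := by
    have h1 : 0 ≤ 2 * B' / d₀ ^ β := div_nonneg (by linarith) (Real.rpow_nonneg hd₀.le _)
    have h2 : 0 ≤ κ * L₁ * d₀ ^ (1 - β) :=
      mul_nonneg (mul_nonneg hκ0.le hL₁0) (Real.rpow_nonneg hd₀.le _)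
    linarith
  refine ⟨2 * B' / d₀ ^ β + κ * L₁ * d₀ ^ (1 - β) + F, hM0, ?_⟩
  intro p hp q hq
  have hd0' : (0:ℝ) ≤ ‖p - q‖ := norm_nonneg _
  rcases eq_or_lt_of_le hd0' with hd0eq | hdpos
  · have hpq : p = q := by
      have : p - q = 0 := norm_eq_zero.mp hd0eq.symm
      exact sub_eq_zero.mp this
    rw [hpq, sub_self, norm_zero, sub_self, norm_zero, Real.zero_rpow hβ0.ne', mul_zero]
  · rcases le_or_gt ‖p - q‖ d₀ with hcase | hcase
    · have h := hclose p hp q hq hcase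
      have hdβ : 0 < ‖p - q‖ ^ β := Real.rpow_pos_of_pos hdpos _
      have e : ‖p - q‖ = ‖p - q‖ ^ (1 - β) * ‖p - q‖ ^ β := by
        rw [← Real.rpow_add hdpos, sub_add_cancel, Real.rpow_one]
      have h2 : κ * L₁ * ‖p - q‖ ≤ κ * L₁ * d₀ ^ (1 - β) * ‖p - q‖ ^ β := by
        calc κ * L₁ * ‖p - q‖ = κ * L₁ * (‖p - q‖ ^ (1 - β) * ‖p - q‖ ^ β) := by rw [← e]
          _ ≤ κ * L₁ * (d₀ ^ (1 - β) * ‖p - q‖ ^ β) := by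
              apply mul_le_mul_of_nonneg_left _ (mul_nonneg hκ0.le hL₁0)
              exact mul_le_mul_of_nonneg_right
                (Real.rpow_le_rpow hd0' hcase (by linarith)) hdβ.le
          _ = κ * L₁ * d₀ ^ (1 - β) * ‖p - q‖ ^ β := by ring
      have h3 : 0 ≤ 2 * B' / d₀ ^ β * ‖p - q‖ ^ β :=
        mul_nonneg (div_nonneg (by linarith) (Real.rpow_nonneg hd₀.le _)) hdβ.le
      calc ‖finf p - finf q‖ ≤ κ * L₁ * ‖p - q‖ + F * ‖p - q‖ ^ β := h
        _ ≤ κ * L₁ * d₀ ^ (1 - β) * ‖p - q‖ ^ β + F * ‖p - q‖ ^ β := by linarith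
        _ ≤ (2 * B' / d₀ ^ β + κ * L₁ * d₀ ^ (1 - β) + F) * ‖p - q‖ ^ β := by
            have expand : (2 * B' / d₀ ^ β + κ * L₁ * d₀ ^ (1 - β) + F) * ‖p - q‖ ^ β
                = 2 * B' / d₀ ^ β * ‖p - q‖ ^ β + (κ * L₁ * d₀ ^ (1 - β) * ‖p - q‖ ^ β
                  + F * ‖p - q‖ ^ β) := by ring
            rw [expand]
            linarith
    · have h1 : ‖finf p - finf q‖ ≤ 2 * B' := by
        calc ‖finf p - finf q‖ ≤ ‖finf p‖ + ‖finf q‖ := norm_sub_le _ _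
          _ ≤ B' + B' := add_le_add (hB' p hp) (hB' q hq)
          _ = 2 * B' := by ring
      have h2 : d₀ ^ β ≤ ‖p - q‖ ^ β := Real.rpow_le_rpow hd₀.le hcase.le hβ0.le
      have hd₀β : 0 < d₀ ^ β := Real.rpow_pos_of_pos hd₀ _
      have h3 : 2 * B' = 2 * B' / d₀ ^ β * d₀ ^ β := by
        field_simp
      have h4 : 0 ≤ κ * L₁ * d₀ ^ (1 - β) + F := by
        have := mul_nonneg (mul_nonneg hκ0.le hL₁0) (Real.rpow_nonneg hd₀.le (1 - β))
        linarith
      calc ‖finf p - finf q‖ ≤ 2 * B' := h1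
        _ = 2 * B' / d₀ ^ β * d₀ ^ β := h3
        _ ≤ 2 * B' / d₀ ^ β * ‖p - q‖ ^ β := by
            apply mul_le_mul_of_nonneg_left h2
            exact div_nonneg (by linarith) hd₀β.le
        _ ≤ (2 * B' / d₀ ^ β + κ * L₁ * d₀ ^ (1 - β) + F) * ‖p - q‖ ^ β := by
            apply mul_le_mul_of_nonneg_right _ (Real.rpow_nonneg hd0' _)
            linarith
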